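/- Let B be a unital C*-algebra, let π : B → B(L) be a unital *-representation, let H ⊆ L be a closed subspace with orthogonal projection P_H, and define ψ : B → B(H) by ψ(x) = P_H π(x)|_H. Then for T ∈ B, one has ψ(T T*) = ψ(T) ψ(T)* if and only if H is invariant under π(T)* (i.e., π(T)*(H) ⊆ H). -/

import Mathlib

open scoped ComplexInnerProductSpace


/-- Agler's lemma: if `π : B → B(L)` is a unital `*`-representation of a unital
C*-algebra, `H ⊆ L` a closed subspace, and `ψ(x) = P_H π(x)|_H` is the compression,
then for `T ∈ B` one has `ψ(T T*) = ψ(T) ψ(T)*` iff `H` is invariant under `π(T)*`. -/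
theorem stmt_6 {B : Type*} [NormedRing B] [StarRing B] [CStarRing B] [NormedAlgebra ℂ B]
    [CompleteSpace B]
    {L : Type*} [NormedAddCommGroup L] [InnerProductSpace ℂ L] [CompleteSpace L]
    (π : B →⋆ₐ[ℂ] (L →L[ℂ] L))
    (K : Submodule ℂ L) [CompleteSpace K]
    (ψ : B → (K →L[ℂ] K))
    (hψ : ∀ x : B, ψ x = K.orthogonalProjectionOnto.comp ((π x).comp K.subtypeL))
    (T : B) :
    ψ (T * star T) = ψ T * star (ψ T) ↔ ∀ x ∈ K, (star (π T)) x ∈ K := by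
  set S := π T with hS
  have hadj : star (ψ T) = K.orthogonalProjectionOnto.comp ((star S).comp K.subtypeL) := by
    rw [hψ, ContinuousLinearMap.star_eq_adjoint, ContinuousLinearMap.adjoint_comp,
      ContinuousLinearMap.adjoint_comp, Submodule.adjoint_subtypeL,
      Submodule.adjoint_orthogonalProjection, ContinuousLinearMap.star_eq_adjoint,
      ContinuousLinearMap.comp_assoc]
  have hmul : π (T * star T) = S.comp (star S) := by
    rw [map_mul, map_star, ContinuousLinearMap.mul_def]
  constructor
  · intro h x hx
    set u : K := ⟨x, hx⟩ with hu
    have hinner : (⟪(ψ (T * star T)) u, u⟫ : ℂ) = ⟪(ψ T * star (ψ T)) u, u⟫ := by rw [h]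
    have hL : (⟪(ψ (T * star T)) u, u⟫ : ℂ) = ⟪star S x, star S x⟫ := by
      rw [hψ, hmul]
      simp only [ContinuousLinearMap.comp_apply, Submodule.subtypeL_apply]
      rw [← Submodule.adjoint_subtypeL, ContinuousLinearMap.adjoint_inner_left,
        Submodule.subtypeL_apply, ContinuousLinearMap.star_eq_adjoint,
        ContinuousLinearMap.adjoint_inner_right]
    have hsu : (star (ψ T)) u = K.orthogonalProjectionOnto (star S x) := by
      rw [hadj]; rfl
    have hψTadj : ψ T = ContinuousLinearMap.adjoint (star (ψ T)) := by
      rw [← ContinuousLinearMap.star_eq_adjoint, star_star]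
    have hR : (⟪(ψ T * star (ψ T)) u, u⟫ : ℂ)
        = ⟪K.orthogonalProjectionOnto (star S x), K.orthogonalProjectionOnto (star S x)⟫ := by
      rw [ContinuousLinearMap.mul_apply, hsu]
      conv_lhs => rw [hψTadj]
      rw [ContinuousLinearMap.adjoint_inner_left, hsu]
    have hnorm : ‖star S x‖ ^ 2 = ‖K.orthogonalProjectionOnto (star S x)‖ ^ 2 := by
      have h2 := hL.symm.trans (hinner.trans hR)
      rw [inner_self_eq_norm_sq_to_K, inner_self_eq_norm_sq_to_K] at h2
      exact_mod_cast h2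
    have hpyth := Submodule.norm_sq_eq_add_norm_sq_projection (star S x) K
    have h0 : ‖Kᗮ.orthogonalProjectionOnto (star S x)‖ ^ 2 = 0 := by linarith
    have h0' : (Kᗮ.orthogonalProjectionOnto (star S x) : L) = 0 := by
      have := pow_eq_zero_iff (n := 2) (by norm_num) |>.mp h0
      simpa [norm_eq_zero] using this
    have hdec := K.starProjection_add_starProjection_orthogonal (star S x)
    rw [Submodule.starProjection_apply, Submodule.starProjection_apply, h0', add_zero] at hdec
    rw [← hdec]
    exact (K.orthogonalProjectionOnto (star S x)).2
  · intro hK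
    ext u
    have hmem : star S (u : L) ∈ K := hK u u.2
    rw [ContinuousLinearMap.mul_apply, hadj, hψ (T * star T), hψ T, hmul]
    simp only [ContinuousLinearMap.comp_apply, Submodule.subtypeL_apply]
    rw [← Submodule.starProjection_apply K (star S (u : L)), Submodule.starProjection_eq_self_iff.mpr hmem]
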